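/- For 0 < γ < 1, the matrix A = D − G, with D = diag(d₁,…,d_{N−1}), d_i = (2−γ)(i^{1−γ} + (N−i)^{1−γ}), and G the symmetric Toeplitz matrix with first row (g₀, g₁, …, g_{N−2}), g₀ = 2, g_k = (k+1)^{2−γ} − 2k^{2−γ} + (k−1)^{2−γ}, is strictly diagonally dominant by rows with positive diagonal and nonpositive off-diagonal entries; moreover each row sum equals ρ_i = α_i + α_{N−i} where α_j = (j−1)^{2−γ} − j^{2−γ} + (2−γ)j^{1−γ} > 0. -/

import Mathlib

/-- Properties of the stiffness matrix `A = D − G` of the piecewise linear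
collocation scheme for the nonlocal problem. -/
theorem stmt_18 (γ : ℝ) (hγ0 : 0 < γ) (hγ1 : γ < 1) (N : ℕ) (hN : 2 ≤ N)
    (g : ℕ → ℝ)
    (hg0 : g 0 = 2)
    (hg : ∀ k : ℕ, 1 ≤ k →
      g k = ((k : ℝ) + 1) ^ (2 - γ) - 2 * (k : ℝ) ^ (2 - γ) + ((k : ℝ) - 1) ^ (2 - γ))
    (d : ℕ → ℝ)
    (hd : ∀ i : ℕ, d i = (2 - γ) * ((i : ℝ) ^ (1 - γ) + ((N : ℝ) - (i : ℝ)) ^ (1 - γ)))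
    (α : ℕ → ℝ)
    (hα : ∀ j : ℕ, α j = ((j : ℝ) - 1) ^ (2 - γ) - (j : ℝ) ^ (2 - γ) + (2 - γ) * (j : ℝ) ^ (1 - γ))
    (A : Matrix (Fin (N - 1)) (Fin (N - 1)) ℝ)
    (hA : ∀ i j : Fin (N - 1),
      A i j = if i = j then d (i.1 + 1) - g 0 else -g (Nat.dist i.1 j.1)) :
    (∀ i : Fin (N - 1), 0 < A i i) ∧
    (∀ i j : Fin (N - 1), i ≠ j → A i j ≤ 0) ∧
    (∀ i : Fin (N - 1), ∑ j ∈ Finset.univ.erase i, |A i j| < A i i) ∧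
    (∀ i : Fin (N - 1), ∑ j, A i j = α (i.1 + 1) + α (N - (i.1 + 1))) ∧
    (∀ j : ℕ, 1 ≤ j → j ≤ N - 1 → 0 < α j) := by
  set p : ℝ := 2 - γ with hp_def
  have hp1 : 1 < p := by simp [hp_def]; linarith
  have hp0 : 0 < p := by linarith
  have hp1' : 0 < p - 1 := by linarith
  have hpe : (1 : ℝ) - γ = p - 1 := by ring
  -- g is nonnegative
  have hg_nonneg : ∀ k : ℕ, 0 ≤ g k := by
    intro k
    rcases Nat.eq_zero_or_pos k with hk | hk
    · simp [hk, hg0]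
    · rw [hg k hk]
      have hk1 : (1 : ℝ) ≤ (k : ℝ) := by exact_mod_cast hk
      have hconv := (strictConvexOn_rpow hp1).convexOn
      have h1 : ((k : ℝ) - 1) ∈ Set.Ici (0:ℝ) := by simp; linarith
      have h2 : ((k : ℝ) + 1) ∈ Set.Ici (0:ℝ) := by simp; linarith
      have := hconv.2 h1 h2 (by norm_num : (0:ℝ) ≤ 1/2) (by norm_num : (0:ℝ) ≤ 1/2)
        (by norm_num)
      simp only [smul_eq_mul] at this
      have heq : (1/2 : ℝ) * ((k:ℝ) - 1) + (1/2 : ℝ) * ((k:ℝ) + 1) = (k:ℝ) := by ring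
      rw [heq] at this
      linarith
  -- positivity of α
  have hαpos : ∀ j : ℕ, 1 ≤ j → 0 < α j := by
    intro j hj
    have hj1 : (1 : ℝ) ≤ (j : ℝ) := by exact_mod_cast hj
    have hderiv : ∀ x : ℝ, HasDerivAt (fun x : ℝ => x ^ p) (p * x ^ (p - 1)) x :=
      fun x => Real.hasDerivAt_rpow_const (Or.inr hp1.le)
    obtain ⟨c, hc, hceq⟩ := exists_hasDerivAt_eq_slope (fun x : ℝ => x ^ p)
      (fun x => p * x ^ (p - 1)) (show (j:ℝ) - 1 < (j:ℝ) by linarith)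
      (fun x _ => (hderiv x).continuousAt.continuousWithinAt)
      (fun x _ => hderiv x)
    have hdenom : (j : ℝ) - ((j:ℝ) - 1) = 1 := by ring
    rw [hdenom, div_one] at hceq
    have hc0 : 0 ≤ c := by have := hc.1; linarith
    have hlt : c ^ (p-1) < (j:ℝ) ^ (p-1) := Real.rpow_lt_rpow hc0 hc.2 hp1'
    have hmul : p * c ^ (p-1) < p * (j:ℝ) ^ (p-1) := by
      exact mul_lt_mul_of_pos_left hlt hp0
    rw [hα j, hpe]
    linarith
  -- telescoping helper
  set h : ℕ → ℝ := fun k => ((k : ℝ) + 1) ^ p - (k : ℝ) ^ p with hh_def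
  have hgh : ∀ k : ℕ, g (k + 1) = h (k + 1) - h k := by
    intro k
    rw [hg (k+1) (by omega), hh_def]
    simp only [← hp_def]
    push_cast
    have : ((k : ℝ) + 1 - 1) = (k : ℝ) := by ring
    rw [this]
    ring
  have h0 : h 0 = 1 := by
    simp [hh_def, Real.zero_rpow (by positivity : p ≠ 0), Real.one_rpow]
  have hsum_g : ∀ m : ℕ, ∑ k ∈ Finset.range m, g (k + 1) = h m - 1 := by
    intro m
    rw [Finset.sum_congr rfl (fun k _ => hgh k), Finset.sum_range_sub h, h0]
  -- key reformulation of A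
  have hA' : ∀ i j : Fin (N-1), A i j
      = (if i = j then d (i.1 + 1) else 0) - g (Nat.dist i.1 j.1) := by
    intro i j
    rw [hA]
    by_cases hij : i = j
    · subst hij; simp [Nat.dist_self]
    · simp [hij]
  -- row sums
  have hrow : ∀ i : Fin (N-1), ∑ j, A i j = α (i.1 + 1) + α (N - (i.1 + 1)) := by
    intro i
    have hi : i.1 < N - 1 := i.2
    have hsplit : ∑ j, A i j = d (i.1 + 1) - ∑ j : Fin (N-1), g (Nat.dist i.1 j.1) := by
      rw [Finset.sum_congr rfl (fun j _ => hA' i j), Finset.sum_sub_distrib,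
        Finset.sum_ite_eq Finset.univ i (fun _ => d (i.1+1))]
      simp
    -- compute the sum of g over the row
    have hS : ∑ j : Fin (N-1), g (Nat.dist i.1 j.1)
        = h i.1 + h (N - 1 - i.1 - 1) := by
      rw [Fin.sum_univ_eq_sum_range (fun j => g (Nat.dist i.1 j)) (N-1)]
      rw [← Finset.sum_range_add_sum_Ico _ (show i.1 + 1 ≤ N - 1 by omega)]
      have e1 : ∑ j ∈ Finset.range (i.1 + 1), g (Nat.dist i.1 j) = 1 + h i.1 := by
        rw [← Finset.sum_range_reflect (fun j => g (Nat.dist i.1 j)) (i.1 + 1)]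
        have : ∀ j ∈ Finset.range (i.1 + 1),
            g (Nat.dist i.1 (i.1 + 1 - 1 - j)) = g j := by
          intro j hj
          rw [Finset.mem_range] at hj
          congr 1
          have hji : j ≤ i.1 := by omega
          simp [Nat.dist]; omega
        rw [Finset.sum_congr rfl this, Finset.sum_range_succ' g i.1, hsum_g, hg0]
        ring
      have e2 : ∑ j ∈ Finset.Ico (i.1 + 1) (N - 1), g (Nat.dist i.1 j)
          = h (N - 1 - i.1 - 1) - 1 := by
        rw [Finset.sum_Ico_eq_sum_range]
        have : ∀ k ∈ Finset.range (N - 1 - (i.1 + 1)),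
            g (Nat.dist i.1 (i.1 + 1 + k)) = g (k + 1) := by
          intro k _
          congr 1
          simp [Nat.dist]; omega
        rw [Finset.sum_congr rfl this, hsum_g]
        congr 2
      rw [e1, e2]; ring
    rw [hsplit, hS]
    -- now pure real arithmetic
    have hNi : N - (i.1 + 1) = N - 1 - i.1 := by omega
    have c1 : ((i.1 + 1 : ℕ) : ℝ) = (i.1 : ℝ) + 1 := by push_cast; ring
    have c2 : ((N - 1 - i.1 - 1 : ℕ) : ℝ) = (N : ℝ) - (i.1 : ℝ) - 2 := by
      have : (N - 1 - i.1 - 1 : ℕ) = N - (i.1 + 2) := by omega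
      rw [this, Nat.cast_sub (by omega)]; push_cast; ring
    have c3 : ((N - 1 - i.1 : ℕ) : ℝ) = (N : ℝ) - (i.1 : ℝ) - 1 := by
      have : (N - 1 - i.1 : ℕ) = N - (i.1 + 1) := by omega
      rw [this, Nat.cast_sub (by omega)]; push_cast; ring
    rw [hd, hα, hα, hNi, hh_def]
    simp only [← hp_def, hpe, c1, c2, c3]
    have e1 : ((N:ℝ) - ((i.1:ℝ) + 1)) = (N:ℝ) - (i.1:ℝ) - 1 := by ring
    have e2 : ((i.1:ℝ) + 1 - 1) = (i.1:ℝ) := by ring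
    have e3 : ((N:ℝ) - (i.1:ℝ) - 1 - 1) = (N:ℝ) - (i.1:ℝ) - 2 := by ring
    have e4 : ((i.1:ℝ) + 1 + 1 - 1) = (i.1:ℝ) + 1 := by ring
    rw [e1, e2, e3]
    ring
  -- diagonal positivity
  have hdiag : ∀ i : Fin (N-1), 0 < A i i := by
    intro i
    have hi : i.1 < N - 1 := i.2
    rw [hA i i, if_pos rfl, hg0, hd]
    have ha1 : (1:ℝ) ≤ ((i.1 + 1 : ℕ) : ℝ) := by exact_mod_cast Nat.one_le_iff_ne_zero.2 (by omega)
    have ha2 : (1:ℝ) ≤ (N : ℝ) - ((i.1 + 1 : ℕ) : ℝ) := by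
      have : (i.1 + 2 : ℕ) ≤ N := by omega
      have := (Nat.cast_le (α := ℝ)).2 this
      push_cast at this ⊢; linarith
    have hb1 : (1:ℝ) ≤ ((i.1 + 1 : ℕ) : ℝ) ^ (1 - γ) := by
      have := Real.rpow_le_rpow (z := 1 - γ) zero_le_one ha1 (by linarith)
      rwa [Real.one_rpow] at this
    have hb2 : (1:ℝ) ≤ ((N : ℝ) - ((i.1 + 1 : ℕ) : ℝ)) ^ (1 - γ) := by
      have := Real.rpow_le_rpow (z := 1 - γ) zero_le_one ha2 (by linarith)
      rwa [Real.one_rpow] at this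
    nlinarith
  -- off-diagonal nonpositivity
  have hoff : ∀ i j : Fin (N-1), i ≠ j → A i j ≤ 0 := by
    intro i j hij
    rw [hA, if_neg hij]
    simpa using hg_nonneg (Nat.dist i.1 j.1)
  refine ⟨hdiag, hoff, ?_, hrow, fun j hj _ => hαpos j hj⟩
  intro i
  have hi : i.1 < N - 1 := i.2
  have habs : ∀ j ∈ Finset.univ.erase i, |A i j| = -A i j := by
    intro j hj
    exact abs_of_nonpos (hoff i j (Finset.ne_of_mem_erase hj).symm)
  rw [Finset.sum_congr rfl habs, Finset.sum_neg_distrib,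
    Finset.sum_erase_eq_sub (Finset.mem_univ i), hrow i]
  have h1 : 0 < α (i.1 + 1) := hαpos _ (by omega)
  have h2 : 0 < α (N - (i.1 + 1)) := hαpos _ (by omega)
  linarith
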